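/- For every integer k ≥ 2 and every integer d > k(k−1)/2, every k-uniform hypergraph H with skeletal degeneracy d_1(H) ≥ d satisfies ex(n,H) ≥ a_k · n^{k − k(k−1)/d} for some constant a_k > 0 depending only on k and all sufficiently large n. -/

import Mathlib

set_option maxHeartbeats 1000000


open Finset

/-- A `k`-uniform hypergraph on vertex type `V`: a finite set of `k`-element edges. -/
structure HyperGraph (k : ℕ) (V : Type) where
  edges : Finset (Finset V)
  card_eq : ∀ e ∈ edges, e.card = k

/-- A finite set system `E` on `V` has degeneracy at most `d` if every nonempty induced
subsystem has a vertex of degree at most `d`. -/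
def degenLE {V : Type} [DecidableEq V] (E : Finset (Finset V)) (d : ℕ) : Prop :=
  ∀ U : Finset V, U.Nonempty → ∃ v ∈ U, (E.filter fun e => v ∈ e ∧ e ⊆ U).card ≤ d

/-- The degeneracy of a finite set system: the least `d` such that every nonempty
induced subsystem has minimum degree at most `d`. -/
noncomputable def degeneracy {V : Type} [DecidableEq V] (E : Finset (Finset V)) : ℕ :=
  sInf {d | degenLE E d}

namespace HyperGraph

variable {k : ℕ} {V W : Type}

/-- The edge set of the `i`-skeleton of `H`: all `(i+1)`-element subsets of edges of `H`. -/
def skeleton [DecidableEq V] (H : HyperGraph k V) (i : ℕ) : Finset (Finset V) :=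
  H.edges.biUnion fun e => e.powersetCard (i + 1)

/-- The `i`-th skeletal degeneracy `d_i(H)`: the degeneracy of the `i`-skeleton of `H`. -/
noncomputable def skelDegen [DecidableEq V] (H : HyperGraph k V) (i : ℕ) : ℕ :=
  degeneracy (H.skeleton i)

/-- The skeletal degeneracy `d_1(H)`: the degeneracy of the `1`-skeleton of `H`. -/
noncomputable def d1 [DecidableEq V] (H : HyperGraph k V) : ℕ := H.skelDegen 1

/-- `H` is `k`-partite with parts given by the fibers of `P`: every edge contains
exactly one vertex from each part. -/
def IsPartite [DecidableEq V] (H : HyperGraph k V) (P : V → Fin k) : Prop :=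
  ∀ e ∈ H.edges, ∀ i : Fin k, (e.filter fun v => P v = i).card = 1

/-- `G` contains a copy of `H`. -/
def ContainsCopy [DecidableEq V] [DecidableEq W] (G : HyperGraph k W) (H : HyperGraph k V) :
    Prop :=
  ∃ f : V → W, Function.Injective f ∧ ∀ e ∈ H.edges, e.image f ∈ G.edges

end HyperGraph

/-- The Turán number `ex(n, H)`: the maximum number of edges in a `k`-uniform hypergraph
on `n` vertices containing no copy of `H`. -/
noncomputable def turanNumber (k n : ℕ) {V : Type} [DecidableEq V] (H : HyperGraph k V) : ℕ :=
  sSup {m | ∃ G : HyperGraph k (Fin n), G.edges.card = m ∧ ¬ G.ContainsCopy H}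

/-- The `q`-color Ramsey number `r(H; q)`: the least `N` such that every `q`-coloring of the
`k`-subsets of an `N`-set contains a monochromatic copy of `H`. -/
noncomputable def ramseyNumber (k q : ℕ) {V : Type} [DecidableEq V] (H : HyperGraph k V) : ℕ :=
  sInf {N | ∀ c : Finset (Fin N) → Fin q,
    ∃ (f : V → Fin N) (i : Fin q), Function.Injective f ∧
      ∀ e ∈ H.edges, c (e.image f) = i}

lemma choose_shift (N M j : ℕ) (hjM : j ≤ M) (hMN : M ≤ N) :
    (N - j).choose (M - j) * ∏ i ∈ range j, (N - i) =
      N.choose M * ∏ i ∈ range j, (M - i) := by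
  induction j with
  | zero => simp
  | succ j ih =>
    have hj : j ≤ M := Nat.le_of_succ_le hjM
    have hid : (N - j) * ((N - j - 1).choose (M - j - 1)) = (N - j).choose (M - j) * (M - j) := by
      have h : Nat.succ (N - j - 1) * (N - j - 1).choose (M - j - 1) = (Nat.succ (N - j - 1)).choose (Nat.succ (M - j - 1)) * Nat.succ (M - j - 1) := Nat.add_one_mul_choose_eq (N - j - 1) (M - j - 1)
      have e1 : Nat.succ (N - j - 1) = N - j := by omega
      have e2 : Nat.succ (M - j - 1) = M - j := by omega
      rwa [e1, e2] at h
    have e3 : N - (j+1) = N - j - 1 := by omega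
    have e4 : M - (j+1) = M - j - 1 := by omega
    rw [prod_range_succ, prod_range_succ, e3, e4]
    calc (N - j - 1).choose (M - j - 1) * ((∏ i ∈ range j, (N - i)) * (N - j))
        = ((N - j) * ((N - j - 1).choose (M - j - 1))) * ∏ i ∈ range j, (N - i) := by ring
      _ = ((N - j).choose (M - j) * (M - j)) * ∏ i ∈ range j, (N - i) := by rw [hid]
      _ = (M - j) * ((N - j).choose (M - j) * ∏ i ∈ range j, (N - i)) := by ring
      _ = (M - j) * (N.choose M * ∏ i ∈ range j, (M - i)) := by rw [ih hj]
      _ = N.choose M * ((∏ i ∈ range j, (M - i)) * (M - j)) := by ring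

/-- Lower bound: `C(N,M) * (M-j)^j ≤ C(N-j, M-j) * N^j`. -/
lemma choose_shift_lower (N M j : ℕ) (hjM : j ≤ M) (hMN : M ≤ N) :
    N.choose M * (M - j)^j ≤ (N - j).choose (M - j) * N^j := by
  calc N.choose M * (M - j)^j = N.choose M * ∏ i ∈ range j, (M - j) := by
        simp [Finset.prod_const]
    _ ≤ N.choose M * ∏ i ∈ range j, (M - i) :=
        Nat.mul_le_mul_left _ (Finset.prod_le_prod' fun i hi => by have := Finset.mem_range.mp hi; omega)
    _ = (N - j).choose (M - j) * ∏ i ∈ range j, (N - i) := (choose_shift N M j hjM hMN).symm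
    _ ≤ (N - j).choose (M - j) * ∏ i ∈ range j, N :=
        Nat.mul_le_mul_left _ (Finset.prod_le_prod' fun i hi => Nat.sub_le _ _)
    _ = (N - j).choose (M - j) * N^j := by simp [Finset.prod_const]

/-- Upper bound in ℝ: `C(N-j,M-j) * N^j ≤ C(N,M) * M^j`. -/
lemma choose_shift_upper (N M j : ℕ) (hjM : j ≤ M) (hMN : M ≤ N) :
    ((N - j).choose (M - j) : ℝ) * (N:ℝ)^j ≤ (N.choose M : ℝ) * (M:ℝ)^j := by
  have hPNpos : 0 < ∏ i ∈ range j, (N - i) := by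
    apply Finset.prod_pos
    intro i hi
    have := Finset.mem_range.mp hi
    omega
  have key : ((∏ i ∈ range j, (M - i) : ℕ) : ℝ) * (N:ℝ)^j ≤
      (M:ℝ)^j * ((∏ i ∈ range j, (N - i) : ℕ) : ℝ) := by
    push_cast
    rw [show ((N:ℝ))^j = ∏ _i ∈ range j, (N:ℝ) by simp [Finset.prod_const],
        show ((M:ℝ))^j = ∏ _i ∈ range j, (M:ℝ) by simp [Finset.prod_const],
        ← Finset.prod_mul_distrib, ← Finset.prod_mul_distrib]
    apply Finset.prod_le_prod
    · intro i _; positivity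
    · intro i hi
      have hij := Finset.mem_range.mp hi
      have hnat : (M - i) * N ≤ M * (N - i) := by
        rw [Nat.sub_mul, Nat.mul_sub]
        have : M * i ≤ i * N := by
          calc M * i = i * M := Nat.mul_comm _ _
            _ ≤ i * N := Nat.mul_le_mul_left _ hMN
        omega
      calc ((M - i : ℕ) : ℝ) * (N:ℝ) = (((M - i) * N : ℕ) : ℝ) := by push_cast; ring
        _ ≤ ((M * (N - i) : ℕ) : ℝ) := Nat.cast_le.mpr hnat
        _ = (M:ℝ) * ((N - i : ℕ) : ℝ) := by push_cast; ring
  have hident := choose_shift N M j hjM hMN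
  have hreal : ((N - j).choose (M - j) : ℝ) * ((∏ i ∈ range j, (N - i) : ℕ) : ℝ) =
      (N.choose M : ℝ) * ((∏ i ∈ range j, (M - i) : ℕ) : ℝ) := by
    exact_mod_cast congrArg (Nat.cast (R := ℝ)) hident
  have hPN : (0:ℝ) < ((∏ i ∈ range j, (N - i) : ℕ) : ℝ) := by exact_mod_cast hPNpos
  rw [← mul_le_mul_iff_of_pos_right hPN]
  calc ((N - j).choose (M - j) : ℝ) * (N:ℝ)^j * ((∏ i ∈ range j, (N - i) : ℕ) : ℝ)
      = (((N - j).choose (M - j) : ℝ) * ((∏ i ∈ range j, (N - i) : ℕ) : ℝ)) * (N:ℝ)^j := by ring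
    _ = ((N.choose M : ℝ) * ((∏ i ∈ range j, (M - i) : ℕ) : ℝ)) * (N:ℝ)^j := by rw [hreal]
    _ = (N.choose M : ℝ) * (((∏ i ∈ range j, (M - i) : ℕ) : ℝ) * (N:ℝ)^j) := by ring
    _ ≤ (N.choose M : ℝ) * ((M:ℝ)^j * ((∏ i ∈ range j, (N - i) : ℕ) : ℝ)) := by
        apply mul_le_mul_of_nonneg_left key (by positivity)
    _ = (N.choose M : ℝ) * (M:ℝ)^j * ((∏ i ∈ range j, (N - i) : ℕ) : ℝ) := by ring

/-- Number of `M`-subsets of `P` containing a fixed `T ⊆ P`. -/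
lemma count_supersets {α : Type*} [DecidableEq α] (P T : Finset α) (hT : T ⊆ P) (M : ℕ)
    (hM : T.card ≤ M) :
    ((P.powersetCard M).filter (fun s => T ⊆ s)).card =
      (P.card - T.card).choose (M - T.card) := by
  rw [← Finset.card_sdiff_of_subset hT, ← Finset.card_powersetCard]
  apply Finset.card_bij' (fun s _ => s \ T) (fun t _ => t ∪ T)
  · intro s hs
    rw [Finset.mem_filter, Finset.mem_powersetCard] at hs
    obtain ⟨⟨hsP, hscard⟩, hTs⟩ := hs
    rw [Finset.mem_powersetCard]
    constructor
    · exact Finset.sdiff_subset_sdiff hsP le_rfl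
    · rw [Finset.card_sdiff_of_subset hTs, hscard]
  · intro t ht
    rw [Finset.mem_powersetCard] at ht
    obtain ⟨htP, htcard⟩ := ht
    have hdisj : Disjoint t T := Finset.disjoint_of_subset_left htP Finset.sdiff_disjoint
    rw [Finset.mem_filter, Finset.mem_powersetCard]
    refine ⟨⟨?_, ?_⟩, Finset.subset_union_right⟩
    · exact Finset.union_subset (htP.trans Finset.sdiff_subset) hT
    · rw [Finset.card_union_of_disjoint hdisj, htcard]
      omega
  · intro s hs
    rw [Finset.mem_filter] at hs
    exact Finset.sdiff_union_of_subset hs.2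
  · intro t ht
    rw [Finset.mem_powersetCard] at ht
    have hdisj : Disjoint t T := Finset.disjoint_of_subset_left ht.1 Finset.sdiff_disjoint
    rw [Finset.union_sdiff_right, Finset.sdiff_eq_self_of_disjoint hdisj]

lemma pow_le_choose_mul (n k : ℕ) (h : 2*k ≤ n) : n^k ≤ n.choose k * (2*k)^k := by
  have h1 : n ≤ 2*(n+1-k) := by omega
  calc n^k ≤ (2*(n+1-k))^k := Nat.pow_le_pow_left h1 k
    _ = 2^k * (n+1-k)^k := by rw [Nat.mul_pow]
    _ ≤ 2^k * n.descFactorial k := Nat.mul_le_mul_left _ (Nat.pow_sub_le_descFactorial n k)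
    _ = 2^k * (k.factorial * n.choose k) := by rw [Nat.descFactorial_eq_factorial_mul_choose]
    _ ≤ 2^k * (k^k * n.choose k) :=
        Nat.mul_le_mul_left _ (Nat.mul_le_mul_right _ (Nat.factorial_le_pow k))
    _ = n.choose k * (2*k)^k := by rw [Nat.mul_pow]; ring

lemma two_mul_choose_two (k : ℕ) : 2 * k.choose 2 = k * (k-1) := by
  rcases k with _ | k
  · simp
  · obtain ⟨r, hr⟩ := Nat.even_mul_succ_self k
    rw [Nat.choose_two_right]
    have ha : (k+1) * ((k+1) - 1) = r + r := by rw [Nat.succ_sub_one, mul_comm]; exact hr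
    omega

lemma sum_card_filter_comm {α β : Type*} (A : Finset α) (B : Finset β) (r : α → β → Prop)
    [∀ e s, Decidable (r e s)] :
    ∑ s ∈ B, (A.filter (fun e => r e s)).card = ∑ e ∈ A, (B.filter (fun s => r e s)).card := by
  simp_rw [Finset.card_filter]
  rw [Finset.sum_comm]

lemma le_turan {k n : ℕ} {V : Type} [DecidableEq V] (H : HyperGraph k V)
    (G : HyperGraph k (Fin n)) (hG : ¬ G.ContainsCopy H) :
    G.edges.card ≤ turanNumber k n H := by
  apply le_csSup
  · refine ⟨Fintype.card (Finset (Fin n)), ?_⟩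
    rintro m ⟨G', hG', -⟩
    rw [← hG']
    exact Finset.card_le_univ _
  · exact ⟨G, rfl, hG⟩


/-- **Theorem (Turán lower bound via skeletal degeneracy).** For every `k ≥ 2` there is a
constant `a_k > 0` such that for every `d > k(k−1)/2`, every `k`-uniform hypergraph `H`
with `d₁(H) ≥ d` satisfies `ex(n,H) ≥ a_k · n^(k − k(k−1)/d)` for all sufficiently
large `n`. -/
theorem turan_lower_bound_skeletal (k : ℕ) (hk : 2 ≤ k) :
    ∃ a > (0 : ℝ),
      ∀ d : ℕ, k * (k - 1) / 2 < d →
      ∀ (V : Type) [Fintype V] [DecidableEq V] (H : HyperGraph k V),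
        d ≤ H.d1 →
        ∃ n0 : ℕ, ∀ n : ℕ, n0 ≤ n →
          a * (n : ℝ) ^ ((k : ℝ) - (k : ℝ) * ((k : ℝ) - 1) / (d : ℝ)) ≤
            (turanNumber k n H : ℝ) := by
  classical
  set K := k.choose 2 with hKdef
  have hK2 : 2 * K = k * (k-1) := two_mul_choose_two k
  have hK1 : 1 ≤ K := by
    have := Nat.choose_pos (show 2 ≤ k from hk)
    omega
  set a : ℝ := ((2*(k:ℝ))^k * 4^K * 4)⁻¹ with hadef
  have hkR : (2:ℝ) ≤ (k:ℝ) := by exact_mod_cast hk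
  have ha_pos : 0 < a := by rw [hadef]; positivity
  refine ⟨a, ha_pos, ?_⟩
  intro d hd V _ _ H hH
  have hKd : K + 1 ≤ d := by
    have h1 : k*(k-1)/2 = K := by omega
    omega
  -- extract a dense induced sub-skeleton
  have hndeg : ¬ degenLE (H.skeleton 1) (d-1) := by
    intro hdeg
    have h1 : H.d1 ≤ d - 1 := Nat.sInf_le hdeg
    omega
  obtain ⟨U, hUne, hUdeg⟩ : ∃ U : Finset V, U.Nonempty ∧
      ∀ v ∈ U, d ≤ ((H.skeleton 1).filter fun e => v ∈ e ∧ e ⊆ U).card := by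
    unfold degenLE at hndeg
    push_neg at hndeg
    obtain ⟨U, hU1, hU2⟩ := hndeg
    exact ⟨U, hU1, fun v hv => by have := hU2 v hv; omega⟩
  obtain ⟨v₀, hv₀⟩ := hUne
  set Sp := (H.skeleton 1).filter (fun p => p ⊆ U) with hSpdef
  set m := Sp.card with hmdef
  set u := U.card with hudef
  have hSpmem : ∀ p ∈ Sp, p.card = 2 ∧ p ⊆ U ∧ ∃ e ∈ H.edges, p ⊆ e := by
    intro p hp
    rw [hSpdef, Finset.mem_filter] at hp
    obtain ⟨hps, hpU⟩ := hp
    rw [HyperGraph.skeleton, Finset.mem_biUnion] at hps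
    obtain ⟨e, he, hpe⟩ := hps
    rw [Finset.mem_powersetCard] at hpe
    exact ⟨hpe.2, hpU, e, he, hpe.1⟩
  have hum : u * d ≤ 2 * m := by
    have hsum : ∑ v ∈ U, (Sp.filter (fun p => v ∈ p)).card = 2 * m := by
      rw [sum_card_filter_comm Sp U (fun p v => v ∈ p)]
      have hcong : ∀ p ∈ Sp, (U.filter (fun v => v ∈ p)).card = 2 := by
        intro p hp
        obtain ⟨h2, hpU, -⟩ := hSpmem p hp
        rw [Finset.filter_mem_eq_inter, Finset.inter_eq_right.mpr hpU, h2]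
      rw [Finset.sum_congr rfl hcong, Finset.sum_const, smul_eq_mul, mul_comm]
    have hterm : ∀ v ∈ U, d ≤ (Sp.filter (fun p => v ∈ p)).card := by
      intro v hv
      have heq : Sp.filter (fun p => v ∈ p) =
          (H.skeleton 1).filter (fun e => v ∈ e ∧ e ⊆ U) := by
        rw [hSpdef, Finset.filter_filter]
        exact Finset.filter_congr fun p _ => by tauto
      rw [heq]
      exact hUdeg v hv
    calc u * d = ∑ _v ∈ U, d := by rw [Finset.sum_const, smul_eq_mul, hudef]
      _ ≤ ∑ v ∈ U, (Sp.filter (fun p => v ∈ p)).card := Finset.sum_le_sum hterm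
      _ = 2 * m := hsum
  have hm1 : 1 ≤ m := by
    have h1 : 1 ≤ u := Finset.card_pos.mpr ⟨v₀, hv₀⟩
    nlinarith
  obtain ⟨p₀, hp₀⟩ : Sp.Nonempty := Finset.card_pos.mp (by omega)
  -- threshold
  set A := ⌈(a⁻¹) ^ ((d:ℝ)/2)⌉₊ with hAdef
  refine ⟨2*k + 8*K + 4*m + 5 + A, ?_⟩
  intro n hn
  have hn2k : 2*k ≤ n := by omega
  have hn8K : 8*K + 1 ≤ n := by omega
  have hn4m : 4*m + 1 ≤ n := by omega
  have hn5 : 5 ≤ n := by omega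
  have hnA : A ≤ n := by omega
  have hn1 : (1:ℝ) ≤ (n:ℝ) := by exact_mod_cast Nat.one_le_iff_ne_zero.mpr (by omega)
  have hnpos : (0:ℝ) < (n:ℝ) := by linarith
  have hd2 : 2 ≤ d := by omega
  have hdR : (2:ℝ) ≤ (d:ℝ) := by exact_mod_cast hd2
  have hdpos : (0:ℝ) < (d:ℝ) := by linarith
  set β : ℝ := (n:ℝ) ^ (-(2:ℝ)/(d:ℝ)) with hβdef
  have hβpos : 0 < β := Real.rpow_pos_of_pos hnpos _
  have hexp_nonpos : -(2:ℝ)/(d:ℝ) ≤ 0 := by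
    apply div_nonpos_of_nonpos_of_nonneg <;> linarith
  have hβ1 : β ≤ 1 := Real.rpow_le_one_of_one_le_of_nonpos hn1 hexp_nonpos
  have hβinv : (n:ℝ)⁻¹ ≤ β := by
    rw [← Real.rpow_neg_one (n:ℝ), hβdef]
    apply Real.rpow_le_rpow_of_exponent_le hn1
    rw [neg_div]
    have : (2:ℝ)/(d:ℝ) ≤ 1 := by
      rw [div_le_one hdpos]; linarith
    linarith
  have hβa : β ≤ a := by
    have h1 : (a⁻¹) ^ ((d:ℝ)/2) ≤ (n:ℝ) :=
      le_trans (Nat.le_ceil _) (by exact_mod_cast hnA)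
    have h2 : a⁻¹ ≤ (n:ℝ) ^ ((2:ℝ)/(d:ℝ)) := by
      have h3 := Real.rpow_le_rpow (by positivity) h1 (by positivity : (0:ℝ) ≤ 2/(d:ℝ))
      rw [← Real.rpow_mul (le_of_lt (inv_pos.mpr ha_pos))] at h3
      have h4 : ((d:ℝ)/2)*((2:ℝ)/(d:ℝ)) = 1 := by
        field_simp
      rwa [h4, Real.rpow_one] at h3
    have h5 : β = ((n:ℝ) ^ ((2:ℝ)/(d:ℝ)))⁻¹ := by
      rw [hβdef, neg_div, Real.rpow_neg (le_of_lt hnpos)]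
    rw [h5, ← inv_inv a]
    apply inv_anti₀ (inv_pos.mpr ha_pos) h2
  set P := (Finset.univ : Finset (Fin n)).powersetCard 2 with hPdef
  set N₂ := n.choose 2 with hN₂def
  have hPcard : P.card = N₂ := by
    rw [hPdef, Finset.card_powersetCard, Finset.card_univ, Fintype.card_fin]
  have hN₂2 : 2 * N₂ = n * (n-1) := two_mul_choose_two n
  have hN₂R : 2 * (N₂:ℝ) = (n:ℝ) * ((n:ℝ)-1) := by
    have := congrArg (Nat.cast (R := ℝ)) hN₂2
    push_cast [Nat.cast_sub (show 1 ≤ n by omega)] at this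
    linarith
  have hN₂pos : (0:ℝ) < (N₂:ℝ) := by
    have : (5:ℝ) ≤ (n:ℝ) := by exact_mod_cast hn5
    nlinarith
  have hβN₂ : ((n:ℝ) - 1)/2 ≤ β * N₂ := by
    have h1 : (n:ℝ)⁻¹ * N₂ ≤ β * N₂ := by
      apply mul_le_mul_of_nonneg_right hβinv (le_of_lt hN₂pos)
    have h2 : (n:ℝ)⁻¹ * N₂ = ((n:ℝ)-1)/2 := by
      field_simp
      linarith
    linarith
  set M := ⌈β * N₂ / 2⌉₊ with hMdef
  have hMlow : β * N₂ / 2 ≤ (M:ℝ) := Nat.le_ceil _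
  have hMhigh : (M:ℝ) ≤ β*(N₂:ℝ)/2 + 1 := by
    have := Nat.ceil_lt_add_one (show (0:ℝ) ≤ β * N₂ / 2 by positivity)
    linarith
  have hnR5 : (5:ℝ) ≤ (n:ℝ) := by exact_mod_cast hn5
  have h2βN₂ : (2:ℝ) ≤ β * N₂ := by linarith
  have hMβ : (M:ℝ) ≤ β * N₂ := by linarith
  have hMN₂ : M ≤ N₂ := by
    have : (M:ℝ) ≤ (N₂:ℝ) := by nlinarith
    exact_mod_cast this
  have hKR : (K:ℝ) ≤ ((n:ℝ)-1)/8 := by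
    have : (8*K+1 : ℝ) ≤ (n:ℝ) := by exact_mod_cast hn8K
    linarith
  have hKβ : (K:ℝ) ≤ β * N₂ / 4 := by linarith
  have hKM : K ≤ M := by
    have : (K:ℝ) ≤ (M:ℝ) := by linarith
    exact_mod_cast this
  have hmM : m ≤ M := by
    have h1 : (4*m+1 : ℝ) ≤ (n:ℝ) := by exact_mod_cast hn4m
    have : (m:ℝ) ≤ (M:ℝ) := by linarith
    exact_mod_cast this
  have hMK4 : β * N₂ / 4 ≤ (M:ℝ) - K := by linarith
  -- the random host
  set Ω := P.powersetCard M with hΩdef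
  set ext : (↥U → Fin n) → V → Fin n :=
    fun g v => if h : v ∈ U then g ⟨v,h⟩ else g ⟨v₀, hv₀⟩ with hextdef
  set cliq : Finset (Finset (Fin n)) → Finset (Finset (Fin n)) :=
    fun s => ((Finset.univ : Finset (Fin n)).powersetCard k).filter
      (fun e => e.powersetCard 2 ⊆ s) with hcliqdef
  set cop : Finset (Finset (Fin n)) → Finset (↥U → Fin n) :=
    fun s => (Finset.univ : Finset (↥U → Fin n)).filter
      (fun g => Function.Injective g ∧ ∀ p ∈ Sp, p.image (ext g) ∈ s) with hcopdef
  set R := n^(k-2) with hRdef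
  set E : ℝ := (k:ℝ) - (k:ℝ) * ((k:ℝ) - 1) / (d:ℝ) with hEdef
  set t := ⌈a * (n:ℝ) ^ E⌉₊ with htdef
  have hΩcard : Ω.card = N₂.choose M := by
    rw [hΩdef, Finset.card_powersetCard, hPcard]
  have hΩne : Ω.Nonempty := by
    rw [hΩdef]
    exact Finset.powersetCard_nonempty.mpr (hPcard ▸ hMN₂)
  have hXsum : ∑ s ∈ Ω, (cliq s).card = (n.choose k) * ((N₂ - K).choose (M - K)) := by
    simp only [hcliqdef, hΩdef]
    rw [sum_card_filter_comm ((Finset.univ : Finset (Fin n)).powersetCard k) (P.powersetCard M)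
      (fun e s => e.powersetCard 2 ⊆ s)]
    have hstep : ∀ e ∈ (Finset.univ : Finset (Fin n)).powersetCard k,
        ((P.powersetCard M).filter (fun s => e.powersetCard 2 ⊆ s)).card =
          (N₂ - K).choose (M - K) := by
      intro e he
      have hecard : e.card = k := (Finset.mem_powersetCard.mp he).2
      have hTsub : e.powersetCard 2 ⊆ P := by
        intro p hp
        rw [Finset.mem_powersetCard] at hp
        rw [hPdef, Finset.mem_powersetCard]
        exact ⟨Finset.subset_univ _, hp.2⟩
      have hTcard : (e.powersetCard 2).card = K := by
        rw [Finset.card_powersetCard, hecard, hKdef]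
      rw [count_supersets P (e.powersetCard 2) hTsub M (by rw [hTcard]; exact hKM),
        hTcard, hPcard]
    rw [Finset.sum_congr rfl hstep, Finset.sum_const, Finset.card_powersetCard,
      Finset.card_univ, Fintype.card_fin, smul_eq_mul]
  have hextInj : ∀ g : ↥U → Fin n, Function.Injective g →
      ∀ x ∈ U, ∀ y ∈ U, ext g x = ext g y → x = y := by
    intro g hg x hx y hy hxy
    simp only [hextdef, dif_pos hx, dif_pos hy] at hxy
    have := hg hxy
    exact congrArg Subtype.val this
  have hext2 : ∀ g : ↥U → Fin n, Function.Injective g → ∀ p ∈ Sp,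
      (p.image (ext g)).card = 2 := by
    intro g hg p hp
    obtain ⟨h2, hpU, -⟩ := hSpmem p hp
    rw [Finset.card_image_of_injOn, h2]
    intro x hx y hy
    exact hextInj g hg x (hpU hx) y (hpU hy)
  have hTgInj : ∀ g : ↥U → Fin n, Function.Injective g →
      ∀ q₁ ∈ Sp, ∀ q₂ ∈ Sp, q₁.image (ext g) = q₂.image (ext g) → q₁ = q₂ := by
    have key : ∀ g : ↥U → Fin n, Function.Injective g →
        ∀ q₁ ∈ Sp, ∀ q₂ ∈ Sp, q₁.image (ext g) = q₂.image (ext g) →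
        ∀ v, v ∈ q₁ → v ∈ q₂ := by
      intro g hg q₁ h₁ q₂ h₂ heq v hv
      have hU₁ := (hSpmem q₁ h₁).2.1
      have hU₂ := (hSpmem q₂ h₂).2.1
      have himg : ext g v ∈ q₂.image (ext g) := heq ▸ Finset.mem_image_of_mem _ hv
      obtain ⟨w, hw, hwv⟩ := Finset.mem_image.mp himg
      have := hextInj g hg w (hU₂ hw) v (hU₁ hv) hwv
      rwa [← this]
    intro g hg q₁ h₁ q₂ h₂ heq
    exact Finset.ext fun v => ⟨key g hg q₁ h₁ q₂ h₂ heq v, key g hg q₂ h₂ q₁ h₁ heq.symm v⟩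
  have hYsum : ∑ s ∈ Ω, (cop s).card ≤ n^u * ((N₂ - m).choose (M - m)) := by
    simp only [hcopdef, hΩdef]
    rw [sum_card_filter_comm (Finset.univ : Finset (↥U → Fin n)) (P.powersetCard M)
      (fun g s => Function.Injective g ∧ ∀ p ∈ Sp, p.image (ext g) ∈ s)]
    have hstep : ∀ g ∈ (Finset.univ : Finset (↥U → Fin n)),
        ((P.powersetCard M).filter (fun s => Function.Injective g ∧
          ∀ p ∈ Sp, p.image (ext g) ∈ s)).card ≤ (N₂ - m).choose (M - m) := by
      intro g _
      by_cases hg : Function.Injective g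
      · have hcongr : ((P.powersetCard M).filter (fun s => Function.Injective g ∧
            ∀ p ∈ Sp, p.image (ext g) ∈ s)) =
            ((P.powersetCard M).filter (fun s => Sp.image (fun p => p.image (ext g)) ⊆ s)) := by
          apply Finset.filter_congr
          intro s _
          constructor
          · rintro ⟨-, h⟩
            rw [Finset.image_subset_iff]
            exact h
          · intro h
            exact ⟨hg, fun p hp => h (Finset.mem_image_of_mem _ hp)⟩
        have hTsub : Sp.image (fun p => p.image (ext g)) ⊆ P := by
          intro q hq
          obtain ⟨p, hp, rfl⟩ := Finset.mem_image.mp hq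
          rw [hPdef, Finset.mem_powersetCard]
          exact ⟨Finset.subset_univ _, hext2 g hg p hp⟩
        have hTcard : (Sp.image (fun p => p.image (ext g))).card = m := by
          rw [Finset.card_image_of_injOn, hmdef]
          intro q₁ h₁ q₂ h₂ heq
          exact hTgInj g hg q₁ h₁ q₂ h₂ heq
        rw [hcongr, count_supersets P _ hTsub M (by rw [hTcard]; exact hmM), hTcard, hPcard]
      · have hempty : ((P.powersetCard M).filter (fun s => Function.Injective g ∧
            ∀ p ∈ Sp, p.image (ext g) ∈ s)) = ∅ :=
          Finset.filter_eq_empty_iff.mpr (fun _ _ h => hg h.1)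
        rw [hempty]
        simp
    calc ∑ g ∈ (Finset.univ : Finset (↥U → Fin n)),
        ((P.powersetCard M).filter (fun s => Function.Injective g ∧
          ∀ p ∈ Sp, p.image (ext g) ∈ s)).card
        ≤ ∑ _g ∈ (Finset.univ : Finset (↥U → Fin n)), (N₂ - m).choose (M - m) :=
          Finset.sum_le_sum hstep
      _ = n^u * ((N₂ - m).choose (M - m)) := by
          rw [Finset.sum_const, smul_eq_mul, Finset.card_univ, Fintype.card_fun,
            Fintype.card_coe, Fintype.card_fin, hudef]
  have hmaster : N₂.choose M * t + (n^u * ((N₂ - m).choose (M - m))) * R ≤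
      n.choose k * ((N₂ - K).choose (M - K)) := by
    have hCpos : (0:ℝ) < (N₂.choose M : ℝ) := by
      exact_mod_cast Nat.choose_pos hMN₂
    have h2KR : (k:ℝ) * ((k:ℝ) - 1) = 2*(K:ℝ) := by
      have hc := congrArg (Nat.cast (R := ℝ)) hK2
      push_cast [Nat.cast_sub (show 1 ≤ k by omega)] at hc
      linarith
    have hβK : β^K = (n:ℝ)^(-(2:ℝ)/(d:ℝ)*(K:ℝ)) := by
      rw [Real.rpow_mul (le_of_lt hnpos), Real.rpow_natCast]
    have hβm : β^m = (n:ℝ)^(-(2:ℝ)/(d:ℝ)*(m:ℝ)) := by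
      rw [Real.rpow_mul (le_of_lt hnpos), Real.rpow_natCast]
    have hnEpos : (0:ℝ) < (n:ℝ)^E := Real.rpow_pos_of_pos hnpos _
    -- (F2)
    have hF2 : (n:ℝ)^u * β^m ≤ 1 := by
      have hude : (u:ℝ)*(d:ℝ) ≤ 2*(m:ℝ) := by exact_mod_cast hum
      have hexp0 : (u:ℝ) + (-(2:ℝ)/(d:ℝ))*(m:ℝ) ≤ 0 := by
        rw [neg_div, neg_mul, ← sub_eq_add_neg, sub_nonpos, div_mul_eq_mul_div,
          le_div_iff₀ hdpos]
        linarith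
      have heq : (n:ℝ)^u * β^m = (n:ℝ) ^ ((u:ℝ) + (-(2:ℝ)/(d:ℝ))*(m:ℝ)) := by
        rw [Real.rpow_add hnpos, Real.rpow_natCast, hβm]
      rw [heq]
      exact Real.rpow_le_one_of_one_le_of_nonpos hn1 hexp0
    -- (F3)
    have hRcast : ((R:ℕ):ℝ) = (n:ℝ) ^ ((k:ℝ) - 2) := by
      rw [hRdef]
      push_cast
      rw [← Real.rpow_natCast (n:ℝ) (k-2)]
      congr 1
      push_cast [Nat.cast_sub hk]
      ring
    have hF3 : ((R:ℕ):ℝ) ≤ a * (n:ℝ)^E := by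
      have hKdR : (K:ℝ) + 1 ≤ (d:ℝ) := by exact_mod_cast hKd
      have h6 : (2*(K:ℝ))/(d:ℝ) + 2/(d:ℝ) ≤ 2 := by
        rw [← add_div, div_le_iff₀ hdpos]
        linarith
      have hexple : (k:ℝ) - 2 ≤ E + (-(2:ℝ)/(d:ℝ)) := by
        rw [hEdef, h2KR]
        rw [neg_div]
        linarith
      have hmono := Real.rpow_le_rpow_of_exponent_le hn1 hexple
      rw [Real.rpow_add hnpos] at hmono
      rw [hRcast]
      calc (n:ℝ) ^ ((k:ℝ) - 2) ≤ (n:ℝ)^E * (n:ℝ)^(-(2:ℝ)/(d:ℝ)) := hmono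
        _ ≤ (n:ℝ)^E * a := mul_le_mul_of_nonneg_left hβa (le_of_lt hnEpos)
        _ = a * (n:ℝ)^E := by ring
    have h1R : (1:ℝ) ≤ ((R:ℕ):ℝ) := by
      have : 0 < n^(k-2) := pow_pos (by omega) _
      rw [hRdef]
      exact_mod_cast this
    have ht1 : (t:ℝ) ≤ a*(n:ℝ)^E + 1 := by
      rw [htdef]
      exact (Nat.ceil_lt_add_one (by positivity)).le
    have h1aE : (1:ℝ) ≤ a*(n:ℝ)^E := le_trans h1R hF3
    -- (F5)
    have hnE2 : (n:ℝ)^E = (n:ℝ)^(k:ℕ) * β^K := by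
      have hexp : E = (k:ℝ) + (-(2:ℝ)/(d:ℝ))*(K:ℝ) := by
        rw [hEdef, h2KR]
        ring
      rw [hexp, Real.rpow_add hnpos, Real.rpow_natCast, hβK]
    have hF5 : 4*a*(n:ℝ)^E ≤ (n.choose k : ℝ) * (β/4)^K := by
      have hApos : (0:ℝ) < (2*(k:ℝ))^k := by positivity
      have hch : (n:ℝ)^(k:ℕ) ≤ (n.choose k:ℝ) * (2*(k:ℝ))^k := by
        have := pow_le_choose_mul n k hn2k
        exact_mod_cast this
      have hch2 : (n:ℝ)^(k:ℕ)/((2*(k:ℝ))^k) ≤ (n.choose k:ℝ) := by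
        rw [div_le_iff₀ hApos]
        exact hch
      have hstep : ((n:ℝ)^(k:ℕ)/((2*(k:ℝ))^k)) * (β/4)^K ≤ (n.choose k:ℝ) * (β/4)^K :=
        mul_le_mul_of_nonneg_right hch2 (by positivity)
      refine le_trans (le_of_eq ?_) hstep
      rw [hadef, hnE2, div_pow]
      field_simp
    -- binomial ratio bounds
    have hChm : ((N₂ - m).choose (M - m) : ℝ) ≤ (N₂.choose M : ℝ) * β^m := by
      have h1 := choose_shift_upper N₂ M m hmM hMN₂
      have hN₂m : (0:ℝ) < (N₂:ℝ)^m := by positivity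
      have h2 : (M:ℝ)^m ≤ (β*(N₂:ℝ))^m := pow_le_pow_left₀ (by positivity) hMβ m
      have h3 : ((N₂ - m).choose (M - m):ℝ)*(N₂:ℝ)^m ≤ ((N₂.choose M:ℝ) * β^m)*(N₂:ℝ)^m := by
        calc ((N₂ - m).choose (M - m):ℝ)*(N₂:ℝ)^m ≤ (N₂.choose M:ℝ)*(M:ℝ)^m := h1
          _ ≤ (N₂.choose M:ℝ)*(β*(N₂:ℝ))^m :=
              mul_le_mul_of_nonneg_left h2 (le_of_lt hCpos)
          _ = ((N₂.choose M:ℝ) * β^m)*(N₂:ℝ)^m := by rw [mul_pow]; ring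
      exact le_of_mul_le_mul_right h3 hN₂m
    have hChK : (N₂.choose M:ℝ) * (β/4)^K ≤ ((N₂ - K).choose (M - K) : ℝ) := by
      have h1 := choose_shift_lower N₂ M K hKM hMN₂
      have h1' : (N₂.choose M:ℝ) * ((M:ℝ)-(K:ℝ))^K ≤ ((N₂ - K).choose (M - K):ℝ)*(N₂:ℝ)^K := by
        have hc := (Nat.cast_le (α := ℝ)).mpr h1
        push_cast [Nat.cast_sub hKM] at hc
        exact_mod_cast hc
      have hN₂K : (0:ℝ) < (N₂:ℝ)^K := by positivity
      have h2 : ((β/4)*(N₂:ℝ))^K ≤ ((M:ℝ)-(K:ℝ))^K :=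
        pow_le_pow_left₀ (by positivity) (by linarith) K
      have h3 : ((N₂.choose M:ℝ) * (β/4)^K)*(N₂:ℝ)^K ≤
          (((N₂ - K).choose (M - K):ℝ))*(N₂:ℝ)^K := by
        calc ((N₂.choose M:ℝ) * (β/4)^K)*(N₂:ℝ)^K
            = (N₂.choose M:ℝ) * ((β/4)*(N₂:ℝ))^K := by rw [mul_pow]; ring
          _ ≤ (N₂.choose M:ℝ) * ((M:ℝ)-(K:ℝ))^K :=
              mul_le_mul_of_nonneg_left h2 (le_of_lt hCpos)
          _ ≤ (((N₂ - K).choose (M - K):ℝ))*(N₂:ℝ)^K := h1'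
      exact le_of_mul_le_mul_right h3 hN₂K
    -- assemble over ℝ
    have hRpos : (0:ℝ) ≤ ((R:ℕ):ℝ) := by linarith
    have hgoalR : (N₂.choose M:ℝ)*(t:ℝ) + ((n:ℝ)^u * ((N₂ - m).choose (M - m):ℝ)) * ((R:ℕ):ℝ) ≤
        (n.choose k:ℝ) * ((N₂ - K).choose (M - K):ℝ) := by
      have hb1 : (N₂.choose M:ℝ)*(t:ℝ) ≤ (N₂.choose M:ℝ)*(a*(n:ℝ)^E + 1) :=
        mul_le_mul_of_nonneg_left ht1 (le_of_lt hCpos)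
      have hb2 : ((n:ℝ)^u * ((N₂ - m).choose (M - m):ℝ)) * ((R:ℕ):ℝ) ≤
          ((n:ℝ)^u * ((N₂.choose M:ℝ) * β^m)) * ((R:ℕ):ℝ) := by
        apply mul_le_mul_of_nonneg_right _ hRpos
        exact mul_le_mul_of_nonneg_left hChm (by positivity)
      have hinner : ((n:ℝ)^u * β^m) * ((R:ℕ):ℝ) ≤ a*(n:ℝ)^E := by
        calc ((n:ℝ)^u * β^m) * ((R:ℕ):ℝ) ≤ 1 * ((R:ℕ):ℝ) :=
            mul_le_mul_of_nonneg_right hF2 hRpos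
          _ = ((R:ℕ):ℝ) := one_mul _
          _ ≤ a*(n:ℝ)^E := hF3
      calc (N₂.choose M:ℝ)*(t:ℝ) + ((n:ℝ)^u * ((N₂ - m).choose (M - m):ℝ)) * ((R:ℕ):ℝ)
          ≤ (N₂.choose M:ℝ)*(a*(n:ℝ)^E + 1) +
            ((n:ℝ)^u * ((N₂.choose M:ℝ) * β^m)) * ((R:ℕ):ℝ) := add_le_add hb1 hb2
        _ = (N₂.choose M:ℝ)*((a*(n:ℝ)^E + 1) + ((n:ℝ)^u * β^m) * ((R:ℕ):ℝ)) := by ring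
        _ ≤ (N₂.choose M:ℝ)*((a*(n:ℝ)^E + a*(n:ℝ)^E) + a*(n:ℝ)^E) := by
            apply mul_le_mul_of_nonneg_left _ (le_of_lt hCpos)
            have := hinner
            linarith
        _ ≤ (N₂.choose M:ℝ)*(4*a*(n:ℝ)^E) := by
            apply mul_le_mul_of_nonneg_left _ (le_of_lt hCpos)
            have haX : (0:ℝ) ≤ a*(n:ℝ)^E := by positivity
            linarith
        _ ≤ (N₂.choose M:ℝ)*((n.choose k:ℝ) * (β/4)^K) :=
            mul_le_mul_of_nonneg_left hF5 (le_of_lt hCpos)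
        _ = (n.choose k:ℝ) * ((N₂.choose M:ℝ)*(β/4)^K) := by ring
        _ ≤ (n.choose k:ℝ) * ((N₂ - K).choose (M - K):ℝ) :=
            mul_le_mul_of_nonneg_left hChK (by positivity)
    have := hgoalR
    push_cast at this
    exact_mod_cast this
  have hEx : ∃ s ∈ Ω, t + (cop s).card * R ≤ (cliq s).card := by
    by_contra hc
    push_neg at hc
    have hlt : ∑ s ∈ Ω, (cliq s).card < ∑ s ∈ Ω, (t + (cop s).card * R) :=
      Finset.sum_lt_sum_of_nonempty hΩne hc
    rw [Finset.sum_add_distrib, Finset.sum_const, hΩcard, ← Finset.sum_mul, hXsum] at hlt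
    have h1 : (∑ s ∈ Ω, (cop s).card) * R ≤ (n^u * ((N₂ - m).choose (M - m))) * R :=
      Nat.mul_le_mul_right _ hYsum
    have h2 : N₂.choose M • t = N₂.choose M * t := by simp
    omega
  obtain ⟨s, hsΩ, hst⟩ := hEx
  set D := (cop s).image (fun g => p₀.image (ext g)) with hDdef
  set s' := s \ D with hs'def
  have hcop' : cop s' = ∅ := by
    rw [Finset.eq_empty_iff_forall_notMem]
    intro g hg
    rw [hcopdef, Finset.mem_filter] at hg
    obtain ⟨-, hginj, hgall⟩ := hg
    have hsub : s' ⊆ s := by rw [hs'def]; exact Finset.sdiff_subset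
    have hgs : g ∈ cop s := by
      rw [hcopdef, Finset.mem_filter]
      exact ⟨Finset.mem_univ _, hginj, fun p hp => hsub (hgall p hp)⟩
    have h1 : p₀.image (ext g) ∈ s' := hgall p₀ hp₀
    have h2 : p₀.image (ext g) ∈ D := by
      rw [hDdef]
      exact Finset.mem_image_of_mem _ hgs
    rw [hs'def, Finset.mem_sdiff] at h1
    exact h1.2 h2
  have hcliqbound : (cliq s).card ≤ (cliq s').card + (cop s).card * R := by
    have hsub : cliq s ⊆ cliq s' ∪ D.biUnion (fun p =>
        ((Finset.univ : Finset (Fin n)).powersetCard k).filter (fun e => p ⊆ e)) := by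
      intro e he
      rw [Finset.mem_union]
      by_cases h : e ∈ cliq s'
      · exact Or.inl h
      · right
        rw [hcliqdef, Finset.mem_filter] at he h
        obtain ⟨hepow, hepairs⟩ := he
        have : ¬ (e.powersetCard 2 ⊆ s') := fun hc => h ⟨hepow, hc⟩
        obtain ⟨q, hq, hqn⟩ := Finset.not_subset.mp this
        have hqs : q ∈ s := hepairs hq
        have hqD : q ∈ D := by
          by_contra hqD
          exact hqn (by rw [hs'def, Finset.mem_sdiff]; exact ⟨hqs, hqD⟩)
        rw [Finset.mem_biUnion]
        exact ⟨q, hqD, Finset.mem_filter.mpr ⟨hepow, (Finset.mem_powersetCard.mp hq).1⟩⟩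
    have hfil : ∀ p ∈ D, (((Finset.univ : Finset (Fin n)).powersetCard k).filter
        (fun e => p ⊆ e)).card ≤ R := by
      intro p hpD
      have hp2 : p.card = 2 := by
        rw [hDdef] at hpD
        obtain ⟨g, hgmem, rfl⟩ := Finset.mem_image.mp hpD
        rw [hcopdef, Finset.mem_filter] at hgmem
        exact hext2 g hgmem.2.1 p₀ hp₀
      have hinj : ∀ e₁ ∈ ((Finset.univ : Finset (Fin n)).powersetCard k).filter
          (fun e => p ⊆ e), ∀ e₂ ∈ ((Finset.univ : Finset (Fin n)).powersetCard k).filter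
          (fun e => p ⊆ e), e₁ \ p = e₂ \ p → e₁ = e₂ := by
        intro e₁ h₁ e₂ h₂ heq
        have hp₁ := (Finset.mem_filter.mp h₁).2
        have hp₂ := (Finset.mem_filter.mp h₂).2
        rw [← Finset.sdiff_union_of_subset hp₁, ← Finset.sdiff_union_of_subset hp₂, heq]
      have hmap : ∀ e ∈ ((Finset.univ : Finset (Fin n)).powersetCard k).filter
          (fun e => p ⊆ e), e \ p ∈ (Finset.univ : Finset (Fin n)).powersetCard (k-2) := by
        intro e heflt
        rw [Finset.mem_filter, Finset.mem_powersetCard] at heflt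
        obtain ⟨⟨-, hecard⟩, hpe⟩ := heflt
        rw [Finset.mem_powersetCard]
        refine ⟨Finset.subset_univ _, ?_⟩
        rw [Finset.card_sdiff_of_subset hpe, hecard, hp2]
      calc (((Finset.univ : Finset (Fin n)).powersetCard k).filter (fun e => p ⊆ e)).card
          ≤ ((Finset.univ : Finset (Fin n)).powersetCard (k-2)).card :=
            Finset.card_le_card_of_injOn (fun e => e \ p) hmap
              (fun e₁ h₁ e₂ h₂ heq => hinj e₁ h₁ e₂ h₂ heq)
        _ = n.choose (k-2) := by
            rw [Finset.card_powersetCard, Finset.card_univ, Fintype.card_fin]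
        _ ≤ R := by rw [hRdef]; exact Nat.choose_le_pow n (k-2)
    calc (cliq s).card ≤ (cliq s' ∪ D.biUnion (fun p =>
          ((Finset.univ : Finset (Fin n)).powersetCard k).filter (fun e => p ⊆ e))).card :=
          Finset.card_le_card hsub
      _ ≤ (cliq s').card + (D.biUnion (fun p =>
          ((Finset.univ : Finset (Fin n)).powersetCard k).filter (fun e => p ⊆ e))).card :=
          Finset.card_union_le _ _
      _ ≤ (cliq s').card + ∑ p ∈ D, (((Finset.univ : Finset (Fin n)).powersetCard k).filter
          (fun e => p ⊆ e)).card := by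
          exact Nat.add_le_add_left (Finset.card_biUnion_le) _
      _ ≤ (cliq s').card + ∑ _p ∈ D, R :=
          Nat.add_le_add_left (Finset.sum_le_sum hfil) _
      _ = (cliq s').card + D.card * R := by rw [Finset.sum_const, smul_eq_mul]
      _ ≤ (cliq s').card + (cop s).card * R :=
          Nat.add_le_add_left (Nat.mul_le_mul_right _ (by rw [hDdef]; exact Finset.card_image_le)) _
  set G' : HyperGraph k (Fin n) :=
    ⟨cliq s', fun e he => (Finset.mem_powersetCard.mp (Finset.mem_filter.mp (by
      rw [hcliqdef] at he; exact he)).1).2⟩ with hG'def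
  have hfree : ¬ G'.ContainsCopy H := by
    rintro ⟨f, hfinj, hfedges⟩
    have hmem : (fun x : ↥U => f ↑x) ∈ cop s' := by
      rw [hcopdef, Finset.mem_filter]
      refine ⟨Finset.mem_univ _, fun x y hxy => Subtype.ext (hfinj hxy), ?_⟩
      intro p hp
      obtain ⟨hp2, hpU, e, heH, hpe⟩ := hSpmem p hp
      have himg := hfedges e heH
      have himg' : (e.image f).powersetCard 2 ⊆ s' := by
        have : e.image f ∈ cliq s' := himg
        rw [hcliqdef, Finset.mem_filter] at this
        exact this.2
      have hpair : p.image (ext (fun x : ↥U => f ↑x)) = p.image f := by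
        apply Finset.image_congr
        intro v hv
        have hvU : v ∈ U := hpU hv
        simp only [hextdef, dif_pos hvU]
      rw [hpair]
      apply himg'
      rw [Finset.mem_powersetCard]
      refine ⟨Finset.image_subset_image hpe, ?_⟩
      rw [Finset.card_image_of_injective _ hfinj, hp2]
    rw [hcop'] at hmem
    exact absurd hmem (Finset.notMem_empty _)
  have hedge : t ≤ G'.edges.card := by
    have : (cliq s').card = G'.edges.card := rfl
    omega
  have hturan : t ≤ turanNumber k n H := le_trans hedge (le_turan H G' hfree)
  calc a * (n:ℝ) ^ E ≤ (t:ℝ) := Nat.le_ceil _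
    _ ≤ (turanNumber k n H : ℝ) := by exact_mod_cast hturan
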